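/- Let u solve the 1D problem u″(t) = −λ²u(t) with u(0) = u₀ ∈ ℝ, u′(0) = 0, λ > 0, λ ≠ ω. Then the WaveHoltz map Π u₀ = (2/T)∫₀ᵀ(cos ωt − 1/4)u(t)dt equals β(λ)·u₀ where β(λ) = (2/T)∫₀ᵀ(cos ωt − 1/4)cos(λt)dt, and the iteration u₀^{(i+1)} = Πu₀^{(i)} converges to 0 geometrically with rate |β(λ)| < 1. -/

import Mathlib

open Real Filter Topology

set_option maxHeartbeats 1000000

lemma mono_aux {f f' : ℝ → ℝ} (hf : ∀ t, HasDerivAt f (f' t) t)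
    (h0 : ∀ t, 0 ≤ t → 0 ≤ f' t) {x : ℝ} (hx : 0 ≤ x) : f 0 ≤ f x := by
  have hm : MonotoneOn f (Set.Ici (0:ℝ)) := by
    apply monotoneOn_of_deriv_nonneg (convex_Ici 0)
    · exact fun t _ => (hf t).continuousAt.continuousWithinAt
    · exact fun t _ => (hf t).differentiableAt.differentiableWithinAt
    · intro t ht
      rw [interior_Ici] at ht
      rw [(hf t).deriv]
      exact h0 t ht.le
  exact hm Set.self_mem_Ici hx hx

lemma sin_ge_cubic {x : ℝ} (hx : 0 ≤ x) : x - x ^ 3 / 6 ≤ Real.sin x := by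
  have h := mono_aux (f := fun x => Real.sin x - x + x ^ 3 / 6)
    (f' := fun x => Real.cos x - 1 + x ^ 2 / 2)
    (fun t => by
      have h := ((Real.hasDerivAt_sin t).sub (hasDerivAt_id t)).add
          ((hasDerivAt_pow 3 t).div_const 6)
      refine h.congr_deriv ?_
      push_cast; ring)
    (fun t _ => by nlinarith [Real.one_sub_sq_div_two_le_cos (x := t)]) hx
  simp at h; linarith

lemma cos_le_quartic_aux {x : ℝ} (hx : 0 ≤ x) : Real.cos x ≤ 1 - x ^ 2 / 2 + x ^ 4 / 24 := by
  have h := mono_aux (f := fun x => 1 - x ^ 2 / 2 + x ^ 4 / 24 - Real.cos x)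
    (f' := fun x => -x + x ^ 3 / 6 + Real.sin x)
    (fun t => by
      have h := (((hasDerivAt_const t (1:ℝ)).sub ((hasDerivAt_pow 2 t).div_const 2)).add
          ((hasDerivAt_pow 4 t).div_const 24)).sub (Real.hasDerivAt_cos t)
      refine h.congr_deriv ?_
      push_cast; ring)
    (fun t ht => by have := sin_ge_cubic ht; linarith) hx
  simp at h; linarith

lemma cos_le_quartic (x : ℝ) : Real.cos x ≤ 1 - x ^ 2 / 2 + x ^ 4 / 24 := by
  rcases le_total 0 x with hx | hx
  · exact cos_le_quartic_aux hx
  · have h := cos_le_quartic_aux (x := -x) (by linarith)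
    rw [Real.cos_neg] at h
    have e2 : (-x) ^ 2 = x ^ 2 := by ring
    have e4 : (-x) ^ 4 = x ^ 4 := by ring
    rw [e2, e4] at h
    exact h

lemma sin_le_quintic {x : ℝ} (hx : 0 ≤ x) : Real.sin x ≤ x - x ^ 3 / 6 + x ^ 5 / 120 := by
  have h := mono_aux (f := fun x => x - x ^ 3 / 6 + x ^ 5 / 120 - Real.sin x)
    (f' := fun x => 1 - x ^ 2 / 2 + x ^ 4 / 24 - Real.cos x)
    (fun t => by
      have h := (((hasDerivAt_id t).sub ((hasDerivAt_pow 3 t).div_const 6)).add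
          ((hasDerivAt_pow 5 t).div_const 120)).sub (Real.hasDerivAt_sin t)
      refine h.congr_deriv ?_
      push_cast; ring)
    (fun t _ => by have := cos_le_quartic t; linarith) hx
  simp at h; linarith

lemma key {x : ℝ} (hx : 0 < x) (hne : x ≠ 2 * π) :
    |Real.sin x| * (4 * π ^ 2 + 3 * x ^ 2) < 2 * x * |4 * π ^ 2 - x ^ 2| := by
  have hp1 : (3.1415:ℝ) < π := by linarith [Real.pi_gt_d6]
  have hp2 : π < 3.1416 := by linarith [Real.pi_lt_d6]
  have hg1 : (9.8690:ℝ) < π ^ 2 := by nlinarith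
  have hg2 : π ^ 2 < 9.8697 := by nlinarith
  rcases le_or_gt x π with h1 | h1
  · -- 0 < x ≤ π
    have hs : |Real.sin x| = Real.sin x := abs_of_nonneg (Real.sin_nonneg_of_nonneg_of_le_pi hx.le h1)
    have ha : |4 * π ^ 2 - x ^ 2| = 4 * π ^ 2 - x ^ 2 := abs_of_pos (by nlinarith)
    rw [hs, ha]
    have hb := sin_le_quintic hx.le
    have hx2 : x ^ 2 ≤ π ^ 2 := by nlinarith
    have hkey : (x - x ^ 3 / 6 + x ^ 5 / 120) * (4 * π ^ 2 + 3 * x ^ 2)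
        < 2 * x * (4 * π ^ 2 - x ^ 2) := by
      nlinarith [mul_pos hx hx, pow_pos hx 3, pow_pos hx 5,
        mul_nonneg (sub_nonneg.2 hx2) (sq_nonneg x),
        mul_nonneg (sub_nonneg.2 hx2) (sq_nonneg (x*x)),
        mul_nonneg (sub_nonneg.2 hx2) hx.le,
        mul_pos (mul_pos hx hx) (mul_pos hx hx)]
    have hF : (0:ℝ) ≤ 4 * π ^ 2 + 3 * x ^ 2 := by positivity
    nlinarith [mul_le_mul_of_nonneg_right hb hF]
  · rcases le_or_gt x (2*π) with h2 | h2
    · -- π < x < 2π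
      have h2' : x < 2*π := lt_of_le_of_ne h2 hne
      obtain ⟨z, hz0, hzπ, hxz⟩ : ∃ z, 0 < z ∧ z < π ∧ x = 2*π - z :=
        ⟨2*π - x, by linarith, by linarith, by ring⟩
      subst hxz
      have hs : |Real.sin (2*π - z)| = Real.sin z := by
        rw [Real.sin_sub, Real.sin_two_pi, Real.cos_two_pi,
          show (0:ℝ) * Real.cos z - 1 * Real.sin z = -Real.sin z by ring, abs_neg,
          abs_of_nonneg (Real.sin_nonneg_of_nonneg_of_le_pi hz0.le hzπ.le)]
      have ha : |4 * π ^ 2 - (2*π - z) ^ 2| = 4 * π ^ 2 - (2*π - z) ^ 2 :=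
        abs_of_pos (by nlinarith)
      rw [hs, ha]
      have hb := sin_le_quintic hz0.le
      have inner : 0 < (8*π^2/3 - 1) - 2*π*z + z^2/2
          - (z^2/120)*(16*π^2 - 12*π*z + 3*z^2) := by
        nlinarith [mul_pos hz0 hz0, pow_pos hz0 3, pow_pos hz0 4,
          mul_nonneg (sub_nonneg.2 hzπ.le) hz0.le,
          mul_nonneg (mul_nonneg (sub_nonneg.2 hzπ.le) hz0.le) hz0.le,
          mul_nonneg (mul_nonneg (mul_nonneg (sub_nonneg.2 hzπ.le) hz0.le) hz0.le) hz0.le,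
          sq_nonneg (π - z), mul_nonneg (sq_nonneg (π - z)) hz0.le,
          mul_nonneg (mul_nonneg (sq_nonneg (π - z)) hz0.le) hz0.le]
      have hF : (0:ℝ) ≤ 4 * π ^ 2 + 3 * (2*π - z) ^ 2 := by positivity
      have hD : 2*(2*π - z)*(4*π^2 - (2*π - z)^2)
          - (z - z^3/6 + z^5/120)*(4*π^2 + 3*(2*π - z)^2)
          = z^3 * ((8*π^2/3 - 1) - 2*π*z + z^2/2
            - (z^2/120)*(16*π^2 - 12*π*z + 3*z^2)) := by ring
      nlinarith [mul_le_mul_of_nonneg_right hb hF, mul_pos (pow_pos hz0 3) inner, hD]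
    · rcases le_or_gt x (2*π + 1.2) with h3 | h3
      · -- 2π < x ≤ 2π + 1.2
        obtain ⟨z, hz0, hz1, hxz⟩ : ∃ z, 0 < z ∧ z ≤ 1.2 ∧ x = 2*π + z :=
          ⟨x - 2*π, by linarith, by linarith, by ring⟩
        subst hxz
        have hs : |Real.sin (2*π + z)| = Real.sin z := by
          rw [Real.sin_add, Real.sin_two_pi, Real.cos_two_pi,
            show (0:ℝ) * Real.cos z + 1 * Real.sin z = Real.sin z by ring,
            abs_of_nonneg (Real.sin_nonneg_of_nonneg_of_le_pi hz0.le (by linarith))]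
        have ha : |4 * π ^ 2 - (2*π + z) ^ 2| = (2*π + z) ^ 2 - 4 * π ^ 2 := by
          rw [abs_of_neg (by nlinarith)]; ring
        rw [hs, ha]
        have hb := sin_le_quintic hz0.le
        have inner : 0 < (8*π^2/3 - 1) + 2*π*z + z^2/2
            - (z^2/120)*(16*π^2 + 12*π*z + 3*z^2) := by
          nlinarith [mul_pos hz0 hz0, pow_pos hz0 3, pow_pos hz0 4,
            mul_nonneg (sub_nonneg.2 hz1) hz0.le,
            mul_nonneg (mul_nonneg (sub_nonneg.2 hz1) hz0.le) hz0.le]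
        have hF : (0:ℝ) ≤ 4 * π ^ 2 + 3 * (2*π + z) ^ 2 := by positivity
        have hD : 2*(2*π + z)*((2*π + z)^2 - 4*π^2)
            - (z - z^3/6 + z^5/120)*(4*π^2 + 3*(2*π + z)^2)
            = z^3 * ((8*π^2/3 - 1) + 2*π*z + z^2/2
              - (z^2/120)*(16*π^2 + 12*π*z + 3*z^2)) := by ring
        nlinarith [mul_le_mul_of_nonneg_right hb hF, mul_pos (pow_pos hz0 3) inner, hD]
      · -- x > 2π + 1.2
        have ha : |4 * π ^ 2 - x ^ 2| = x ^ 2 - 4 * π ^ 2 := by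
          rw [abs_of_neg (by nlinarith)]; ring
        rw [ha]
        have hb : |Real.sin x| ≤ 1 := abs_sin_le_one x
        have hx7 : (7.483:ℝ) < x := by linarith
        have hF : (0:ℝ) ≤ 4 * π ^ 2 + 3 * x ^ 2 := by positivity
        have hkey : 4 * π ^ 2 + 3 * x ^ 2 < 2 * x * (x ^ 2 - 4 * π ^ 2) := by
          nlinarith [mul_pos hx hx, pow_pos hx 3, sq_nonneg (x - 7.483),
            mul_nonneg (sub_nonneg.2 hx7.le) (sq_nonneg x),
            mul_nonneg (sub_nonneg.2 hx7.le) hx.le]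
        nlinarith [mul_le_mul_of_nonneg_right hb hF]

theorem waveholtz_mode_contraction (ω lam T u0 : ℝ) (hω : 0 < ω) (hlam : 0 < lam)
    (hne : lam ≠ ω) (hT : T = 2 * π / ω)
    (u u' : ℝ → ℝ)
    (hu' : ∀ t, HasDerivAt u (u' t) t)
    (hu'' : ∀ t, HasDerivAt u' (-(lam ^ 2) * u t) t)
    (h0 : u 0 = u0) (h0' : u' 0 = 0) :
    ((2 / T) * ∫ t in (0:ℝ)..T, (Real.cos (ω * t) - 1/4) * u t)
      = ((2 / T) * ∫ t in (0:ℝ)..T, (Real.cos (ω * t) - 1/4) * Real.cos (lam * t)) * u0 ∧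
    |(2 / T) * ∫ t in (0:ℝ)..T, (Real.cos (ω * t) - 1/4) * Real.cos (lam * t)| < 1 ∧
    Tendsto (fun i : ℕ =>
        ((2 / T) * ∫ t in (0:ℝ)..T, (Real.cos (ω * t) - 1/4) * Real.cos (lam * t)) ^ i * u0)
      atTop (𝓝 0) := by
  have hπ := Real.pi_pos
  have hT0 : 0 < T := by rw [hT]; positivity
  -- ODE uniqueness: u t = u0 * cos (lam * t)
  have hu_eq : ∀ t, u t = u0 * Real.cos (lam * t) := by
    set v : ℝ → ℝ := fun t => u t - u0 * Real.cos (lam * t) with hv_def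
    set w : ℝ → ℝ := fun t => u' t + u0 * lam * Real.sin (lam * t) with hw_def
    have hv : ∀ t, HasDerivAt v (w t) t := by
      intro t
      have hc : HasDerivAt (fun t => u0 * Real.cos (lam * t))
          (u0 * (-Real.sin (lam * t) * (lam * 1))) t :=
        (((hasDerivAt_id t).const_mul lam).cos).const_mul u0
      have := (hu' t).sub hc
      refine this.congr_deriv ?_; simp [hw_def]; ring
    have hw : ∀ t, HasDerivAt w (-(lam ^ 2) * v t) t := by
      intro t
      have hs : HasDerivAt (fun t => u0 * lam * Real.sin (lam * t))
          (u0 * lam * (Real.cos (lam * t) * (lam * 1))) t :=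
        (((hasDerivAt_id t).const_mul lam).sin).const_mul (u0 * lam)
      have := (hu'' t).add hs
      refine this.congr_deriv ?_; simp [hv_def]; ring
    have hE : ∀ t, HasDerivAt (fun t => w t ^ 2 + lam ^ 2 * v t ^ 2) 0 t := by
      intro t
      have := ((hw t).pow 2).add (((hv t).pow 2).const_mul (lam ^ 2))
      refine this.congr_deriv ?_; push_cast; ring
    have hconst : ∀ t, w t ^ 2 + lam ^ 2 * v t ^ 2 = w 0 ^ 2 + lam ^ 2 * v 0 ^ 2 :=
      fun t => is_const_of_deriv_eq_zero (fun s => (hE s).differentiableAt)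
        (fun s => (hE s).deriv) t 0
    have hE0 : w 0 ^ 2 + lam ^ 2 * v 0 ^ 2 = 0 := by
      simp [hw_def, hv_def, h0, h0']
    intro t
    have ht := hconst t
    rw [hE0] at ht
    have h1 : lam ^ 2 * v t ^ 2 ≤ 0 := by nlinarith [sq_nonneg (w t)]
    have h2 : (0:ℝ) ≤ lam ^ 2 * v t ^ 2 := by positivity
    have h3 : lam ^ 2 * v t ^ 2 = 0 := le_antisymm h1 h2
    have h4 : v t ^ 2 = 0 := by
      rcases mul_eq_zero.mp h3 with h | h
      · exact absurd h (by positivity)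
      · exact h
    have h5 : v t = 0 := by
      have := pow_eq_zero_iff (n := 2) (by norm_num) |>.mp h4
      exact this
    have : u t - u0 * Real.cos (lam * t) = 0 := h5
    linarith
  -- exact value of the filter integral
  have hωlam : ω - lam ≠ 0 := sub_ne_zero.mpr (fun h => hne h.symm)
  have hωplam : ω + lam ≠ 0 := by positivity
  have hlam0 : lam ≠ 0 := ne_of_gt hlam
  have hT0' : T ≠ 0 := ne_of_gt hT0
  have hI : (∫ t in (0:ℝ)..T, (Real.cos (ω * t) - 1/4) * Real.cos (lam * t))
      = Real.sin (lam * T) * (1 / (2 * (ω + lam)) - 1 / (2 * (ω - lam)) - 1 / (4 * lam)) := by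
    have hderiv : ∀ t ∈ Set.uIcc (0:ℝ) T, HasDerivAt
        (fun t => Real.sin ((ω - lam) * t) / (2 * (ω - lam))
          + Real.sin ((ω + lam) * t) / (2 * (ω + lam)) - Real.sin (lam * t) / (4 * lam))
        ((Real.cos (ω * t) - 1/4) * Real.cos (lam * t)) t := by
      intro t _
      have h1 : HasDerivAt (fun t => Real.sin ((ω - lam) * t) / (2 * (ω - lam)))
          (Real.cos ((ω - lam) * t) * ((ω - lam) * 1) / (2 * (ω - lam))) t :=
        (((hasDerivAt_id t).const_mul (ω - lam)).sin).div_const _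
      have h2 : HasDerivAt (fun t => Real.sin ((ω + lam) * t) / (2 * (ω + lam)))
          (Real.cos ((ω + lam) * t) * ((ω + lam) * 1) / (2 * (ω + lam))) t :=
        (((hasDerivAt_id t).const_mul (ω + lam)).sin).div_const _
      have h3 : HasDerivAt (fun t => Real.sin (lam * t) / (4 * lam))
          (Real.cos (lam * t) * (lam * 1) / (4 * lam)) t :=
        (((hasDerivAt_id t).const_mul lam).sin).div_const _
      have := (h1.add h2).sub h3
      refine this.congr_deriv ?_
      rw [show (ω - lam) * t = ω * t - lam * t by ring,
        show (ω + lam) * t = ω * t + lam * t by ring,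
        Real.cos_sub, Real.cos_add]
      field_simp
      ring
    have hint : IntervalIntegrable (fun t => (Real.cos (ω * t) - 1/4) * Real.cos (lam * t))
        MeasureTheory.volume 0 T := by
      apply Continuous.intervalIntegrable
      exact ((Real.continuous_cos.comp (continuous_const.mul continuous_id)).sub
        continuous_const).mul (Real.continuous_cos.comp (continuous_const.mul continuous_id))
    rw [intervalIntegral.integral_eq_sub_of_hasDerivAt hderiv hint]
    have hωT : ω * T = 2 * π := by rw [hT]; field_simp
    rw [show (ω - lam) * T = 2 * π - lam * T by rw [← hωT]; ring,
      show (ω + lam) * T = 2 * π + lam * T by rw [← hωT]; ring,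
      Real.sin_sub, Real.sin_add, Real.sin_two_pi, Real.cos_two_pi]
    simp
    field_simp
    ring
  set x : ℝ := lam * T with hx_def
  have hx0 : 0 < x := mul_pos hlam hT0
  have hωT : ω * T = 2 * π := by rw [hT]; field_simp
  have hxne : x ≠ 2 * π := by
    rw [hx_def, ← hωT]
    intro h
    exact hne (mul_right_cancel₀ hT0' h)
  have hden : 4 * π ^ 2 - x ^ 2 ≠ 0 := by
    intro h
    have h' : (2 * π - x) * (2 * π + x) = 0 := by nlinarith
    rcases mul_eq_zero.mp h' with h'' | h''
    · exact hxne (by linarith)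
    · nlinarith
  have hden2 : 2 * x * (4 * π ^ 2 - x ^ 2) ≠ 0 :=
    mul_ne_zero (by positivity) hden
  -- β in closed form
  have hβ : (2 / T) * (∫ t in (0:ℝ)..T, (Real.cos (ω * t) - 1/4) * Real.cos (lam * t))
      = -(Real.sin x * (4 * π ^ 2 + 3 * x ^ 2)) / (2 * x * (4 * π ^ 2 - x ^ 2)) := by
    rw [hI, eq_div_iff hden2]
    have h4π : (4:ℝ) * π ^ 2 = (ω * T) ^ 2 := by rw [hωT]; ring
    rw [h4π, hx_def]
    field_simp
    ring
  have habs : |(2 / T) * (∫ t in (0:ℝ)..T, (Real.cos (ω * t) - 1/4) * Real.cos (lam * t))| < 1 := by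
    rw [hβ, abs_div, abs_neg, abs_mul]
    rw [abs_of_nonneg (by positivity : (0:ℝ) ≤ 4 * π ^ 2 + 3 * x ^ 2)]
    rw [div_lt_one (by
      have : |2 * x * (4 * π ^ 2 - x ^ 2)| > 0 := abs_pos.mpr hden2
      exact this)]
    calc |Real.sin x| * (4 * π ^ 2 + 3 * x ^ 2)
        < 2 * x * |4 * π ^ 2 - x ^ 2| := key hx0 hxne
      _ = |2 * x * (4 * π ^ 2 - x ^ 2)| := by
          rw [abs_mul, abs_of_pos (by positivity : (0:ℝ) < 2 * x)]
  refine ⟨?_, habs, ?_⟩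
  · have heq : (∫ t in (0:ℝ)..T, (Real.cos (ω * t) - 1/4) * u t)
        = u0 * ∫ t in (0:ℝ)..T, (Real.cos (ω * t) - 1/4) * Real.cos (lam * t) := by
      rw [← intervalIntegral.integral_const_mul]
      apply intervalIntegral.integral_congr
      intro t _
      show (Real.cos (ω * t) - 1/4) * u t = u0 * ((Real.cos (ω * t) - 1/4) * Real.cos (lam * t))
      rw [hu_eq t]; ring
    rw [heq]; ring
  · have := (tendsto_pow_atTop_nhds_zero_of_abs_lt_one habs).mul_const u0
    simpa using this
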